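/- Let λ(x,y) be any function of two variables (with values in a commutative ring, defined wherever needed). Define a product on the graded space F = ⊕_{α≥0} F_α, where F_α is the space of symmetric functions of α variables, by (f*g)(u_1,...,u_{α+β}) = (1/(α!β!)) Σ_{σ ∈ S_{α+β}} f(u_{σ(1)},...,u_{σ(α)}) g(u_{σ(α+1)},...,u_{σ(α+β)}) Π_{1≤i≤α, α+1≤j≤α+β} λ(u_{σ(i)}, u_{σ(j)}). Then this product is associative. -/

import Mathlib

open Finset

/-- The shuffle-type product with weight `lam`: for `f` a function of `α`
variables and `g` a function of `β` variables,
`(f*g)(u₁,…,u_{α+β}) = (1/(α!β!)) Σ_{σ ∈ S_{α+β}}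
  f(u_{σ(1)},…,u_{σ(α)}) g(u_{σ(α+1)},…,u_{σ(α+β)})
  Π_{i ≤ α < j} λ(u_{σ(i)}, u_{σ(j)})`. -/
noncomputable def shuffleMul {U : Type*} (lam : U → U → ℂ) {α β : ℕ}
    (f : (Fin α → U) → ℂ) (g : (Fin β → U) → ℂ) : (Fin (α + β) → U) → ℂ :=
  fun u =>
    (1 / ((α.factorial : ℂ) * (β.factorial : ℂ))) *
      ∑ σ : Equiv.Perm (Fin (α + β)),
        (f fun i => u (σ (Fin.castAdd β i))) * (g fun j => u (σ (Fin.natAdd α j))) *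
          ∏ i : Fin α, ∏ j : Fin β,
            lam (u (σ (Fin.castAdd β i))) (u (σ (Fin.natAdd α j)))

namespace ShuffleAux
variable {U : Type*}

def extR {m n : ℕ} (τ : Equiv.Perm (Fin m)) : Equiv.Perm (Fin (m + n)) :=
  finSumFinEquiv.permCongr (Equiv.sumCongr τ (Equiv.refl (Fin n)))

@[simp] lemma extR_castAdd {m n : ℕ} (τ : Equiv.Perm (Fin m)) (x : Fin m) :
    extR (n := n) τ (Fin.castAdd n x) = Fin.castAdd n (τ x) := by
  simp [extR, Equiv.permCongr_apply]

@[simp] lemma extR_natAdd {m n : ℕ} (τ : Equiv.Perm (Fin m)) (y : Fin n) :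
    extR (n := n) τ (Fin.natAdd m y) = Fin.natAdd m y := by
  simp [extR, Equiv.permCongr_apply]

def extL {m n : ℕ} (τ : Equiv.Perm (Fin n)) : Equiv.Perm (Fin (m + n)) :=
  finSumFinEquiv.permCongr (Equiv.sumCongr (Equiv.refl (Fin m)) τ)

@[simp] lemma extL_castAdd {m n : ℕ} (τ : Equiv.Perm (Fin n)) (x : Fin m) :
    extL (m := m) τ (Fin.castAdd n x) = Fin.castAdd n x := by
  simp [extL, Equiv.permCongr_apply]

@[simp] lemma extL_natAdd {m n : ℕ} (τ : Equiv.Perm (Fin n)) (y : Fin n) :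
    extL (m := m) τ (Fin.natAdd m y) = Fin.natAdd m (τ y) := by
  simp [extL, Equiv.permCongr_apply]

/-- canonical three-block term (left association indexing). -/
noncomputable def canonL (lam : U → U → ℂ) {α β γ : ℕ}
    (f : (Fin α → U) → ℂ) (g : (Fin β → U) → ℂ) (h : (Fin γ → U) → ℂ)
    (u : Fin (α + β + γ) → U) (ρ : Equiv.Perm (Fin (α + β + γ))) : ℂ :=
  f (fun i => u (ρ (Fin.castAdd γ (Fin.castAdd β i)))) *
  g (fun j => u (ρ (Fin.castAdd γ (Fin.natAdd α j)))) *
  h (fun k => u (ρ (Fin.natAdd (α + β) k))) *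
  ((∏ i : Fin α, ∏ j : Fin β,
      lam (u (ρ (Fin.castAdd γ (Fin.castAdd β i)))) (u (ρ (Fin.castAdd γ (Fin.natAdd α j))))) *
   (∏ i : Fin α, ∏ k : Fin γ,
      lam (u (ρ (Fin.castAdd γ (Fin.castAdd β i)))) (u (ρ (Fin.natAdd (α + β) k)))) *
   (∏ j : Fin β, ∏ k : Fin γ,
      lam (u (ρ (Fin.castAdd γ (Fin.natAdd α j)))) (u (ρ (Fin.natAdd (α + β) k)))))

lemma left_form (lam : U → U → ℂ) {α β γ : ℕ}
    (f : (Fin α → U) → ℂ) (g : (Fin β → U) → ℂ) (h : (Fin γ → U) → ℂ)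
    (u : Fin (α + β + γ) → U) :
    shuffleMul lam (shuffleMul lam f g) h u
      = (1 / ((α.factorial : ℂ) * β.factorial * γ.factorial)) *
          ∑ ρ : Equiv.Perm (Fin (α + β + γ)), canonL lam f g h u ρ := by
  simp only [shuffleMul]
  have key : ∀ (σ : Equiv.Perm (Fin (α + β + γ))) (τ : Equiv.Perm (Fin (α + β))),
      ((f fun i => u (σ (Fin.castAdd γ (τ (Fin.castAdd β i))))) *
        (g fun j => u (σ (Fin.castAdd γ (τ (Fin.natAdd α j))))) *
        ∏ i : Fin α, ∏ j : Fin β,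
          lam (u (σ (Fin.castAdd γ (τ (Fin.castAdd β i)))))
              (u (σ (Fin.castAdd γ (τ (Fin.natAdd α j)))))) *
        ((h fun k => u (σ (Fin.natAdd (α + β) k))) *
          ∏ x : Fin (α + β), ∏ k : Fin γ,
            lam (u (σ (Fin.castAdd γ x))) (u (σ (Fin.natAdd (α + β) k))))
      = canonL lam f g h u (σ * extR (n := γ) τ) := by
    intro σ τ
    have hsplit : (∏ x : Fin (α + β), ∏ k : Fin γ,
          lam (u (σ (Fin.castAdd γ x))) (u (σ (Fin.natAdd (α + β) k))))
        = (∏ i : Fin α, ∏ k : Fin γ,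
            lam (u (σ (Fin.castAdd γ (τ (Fin.castAdd β i))))) (u (σ (Fin.natAdd (α + β) k)))) *
          (∏ j : Fin β, ∏ k : Fin γ,
            lam (u (σ (Fin.castAdd γ (τ (Fin.natAdd α j))))) (u (σ (Fin.natAdd (α + β) k)))) := by
      rw [← Equiv.prod_comp τ (fun x => ∏ k : Fin γ,
        lam (u (σ (Fin.castAdd γ x))) (u (σ (Fin.natAdd (α + β) k)))), Fin.prod_univ_add]
    rw [hsplit]
    simp only [canonL, Equiv.Perm.mul_apply, extR_castAdd, extR_natAdd]
    ring
  calc (1 / ((α + β).factorial * (γ.factorial : ℂ))) *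
      ∑ σ : Equiv.Perm (Fin (α + β + γ)),
        ((1 / ((α.factorial : ℂ) * β.factorial)) *
          ∑ τ : Equiv.Perm (Fin (α + β)),
            (f fun i => u (σ (Fin.castAdd γ (τ (Fin.castAdd β i))))) *
            (g fun j => u (σ (Fin.castAdd γ (τ (Fin.natAdd α j))))) *
            ∏ i : Fin α, ∏ j : Fin β,
              lam (u (σ (Fin.castAdd γ (τ (Fin.castAdd β i)))))
                  (u (σ (Fin.castAdd γ (τ (Fin.natAdd α j)))))) *
        (h fun k => u (σ (Fin.natAdd (α + β) k))) *
        ∏ x : Fin (α + β), ∏ k : Fin γ,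
          lam (u (σ (Fin.castAdd γ x))) (u (σ (Fin.natAdd (α + β) k)))
      = (1 / ((α + β).factorial * (γ.factorial : ℂ))) * ((1 / ((α.factorial : ℂ) * β.factorial)) *
          ∑ σ : Equiv.Perm (Fin (α + β + γ)), ∑ τ : Equiv.Perm (Fin (α + β)),
            canonL lam f g h u (σ * extR (n := γ) τ)) := by
        have per : ∀ σ : Equiv.Perm (Fin (α + β + γ)),
            ((1 / ((α.factorial : ℂ) * β.factorial)) *
              ∑ τ : Equiv.Perm (Fin (α + β)),
                (f fun i => u (σ (Fin.castAdd γ (τ (Fin.castAdd β i))))) *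
                (g fun j => u (σ (Fin.castAdd γ (τ (Fin.natAdd α j))))) *
                ∏ i : Fin α, ∏ j : Fin β,
                  lam (u (σ (Fin.castAdd γ (τ (Fin.castAdd β i)))))
                      (u (σ (Fin.castAdd γ (τ (Fin.natAdd α j)))))) *
            (h fun k => u (σ (Fin.natAdd (α + β) k))) *
            (∏ x : Fin (α + β), ∏ k : Fin γ,
              lam (u (σ (Fin.castAdd γ x))) (u (σ (Fin.natAdd (α + β) k))))
            = (1 / ((α.factorial : ℂ) * β.factorial)) *
                ∑ τ : Equiv.Perm (Fin (α + β)), canonL lam f g h u (σ * extR (n := γ) τ) := by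
          intro σ
          rw [Finset.sum_congr rfl fun τ _ => (key σ τ).symm, ← Finset.sum_mul]
          ring
        rw [Finset.sum_congr rfl fun σ _ => per σ, ← Finset.mul_sum]
    _ = (1 / ((α + β).factorial * (γ.factorial : ℂ))) * ((1 / ((α.factorial : ℂ) * β.factorial)) *
          ∑ τ : Equiv.Perm (Fin (α + β)), ∑ σ : Equiv.Perm (Fin (α + β + γ)),
            canonL lam f g h u (σ * extR (n := γ) τ)) := by rw [Finset.sum_comm]
    _ = (1 / ((α + β).factorial * (γ.factorial : ℂ))) * ((1 / ((α.factorial : ℂ) * β.factorial)) *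
          (((α + β).factorial : ℂ) * ∑ ρ : Equiv.Perm (Fin (α + β + γ)), canonL lam f g h u ρ)) := by
        have swap : ∀ τ : Equiv.Perm (Fin (α + β)),
            (∑ σ : Equiv.Perm (Fin (α + β + γ)), canonL lam f g h u (σ * extR (n := γ) τ))
              = ∑ ρ : Equiv.Perm (Fin (α + β + γ)), canonL lam f g h u ρ := fun τ =>
          Fintype.sum_equiv (Equiv.mulRight (extR (n := γ) τ)) _ _ (fun σ => rfl)
        rw [Finset.sum_congr rfl fun τ _ => swap τ, Finset.sum_const, nsmul_eq_mul]
        simp [Fintype.card_perm]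
    _ = (1 / ((α.factorial : ℂ) * β.factorial * γ.factorial)) *
          ∑ ρ : Equiv.Perm (Fin (α + β + γ)), canonL lam f g h u ρ := by
        have h1 : ((α + β).factorial : ℂ) ≠ 0 := Nat.cast_ne_zero.2 (Nat.factorial_ne_zero _)
        have h2 : ((γ).factorial : ℂ) ≠ 0 := Nat.cast_ne_zero.2 (Nat.factorial_ne_zero _)
        have h3 : ((α).factorial : ℂ) ≠ 0 := Nat.cast_ne_zero.2 (Nat.factorial_ne_zero _)
        have h4 : ((β).factorial : ℂ) ≠ 0 := Nat.cast_ne_zero.2 (Nat.factorial_ne_zero _)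
        field_simp


/-- canonical three-block term (right association indexing). -/
noncomputable def canonR (lam : U → U → ℂ) {α β γ : ℕ}
    (f : (Fin α → U) → ℂ) (g : (Fin β → U) → ℂ) (h : (Fin γ → U) → ℂ)
    (u : Fin (α + (β + γ)) → U) (ρ : Equiv.Perm (Fin (α + (β + γ)))) : ℂ :=
  f (fun i => u (ρ (Fin.castAdd (β + γ) i))) *
  g (fun j => u (ρ (Fin.natAdd α (Fin.castAdd γ j)))) *
  h (fun k => u (ρ (Fin.natAdd α (Fin.natAdd β k)))) *
  ((∏ i : Fin α, ∏ j : Fin β,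
      lam (u (ρ (Fin.castAdd (β + γ) i))) (u (ρ (Fin.natAdd α (Fin.castAdd γ j))))) *
   (∏ i : Fin α, ∏ k : Fin γ,
      lam (u (ρ (Fin.castAdd (β + γ) i))) (u (ρ (Fin.natAdd α (Fin.natAdd β k))))) *
   (∏ j : Fin β, ∏ k : Fin γ,
      lam (u (ρ (Fin.natAdd α (Fin.castAdd γ j)))) (u (ρ (Fin.natAdd α (Fin.natAdd β k))))))

lemma right_form (lam : U → U → ℂ) {α β γ : ℕ}
    (f : (Fin α → U) → ℂ) (g : (Fin β → U) → ℂ) (h : (Fin γ → U) → ℂ)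
    (u : Fin (α + (β + γ)) → U) :
    shuffleMul lam f (shuffleMul lam g h) u
      = (1 / ((α.factorial : ℂ) * β.factorial * γ.factorial)) *
          ∑ ρ : Equiv.Perm (Fin (α + (β + γ))), canonR lam f g h u ρ := by
  simp only [shuffleMul]
  have key : ∀ (σ : Equiv.Perm (Fin (α + (β + γ)))) (τ : Equiv.Perm (Fin (β + γ))),
      (f fun i => u (σ (Fin.castAdd (β + γ) i))) *
        ((g fun j => u (σ (Fin.natAdd α (τ (Fin.castAdd γ j))))) *
         (h fun k => u (σ (Fin.natAdd α (τ (Fin.natAdd β k))))) *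
         ∏ j : Fin β, ∏ k : Fin γ,
           lam (u (σ (Fin.natAdd α (τ (Fin.castAdd γ j)))))
               (u (σ (Fin.natAdd α (τ (Fin.natAdd β k)))))) *
        (∏ i : Fin α, ∏ x : Fin (β + γ),
           lam (u (σ (Fin.castAdd (β + γ) i))) (u (σ (Fin.natAdd α x))))
      = canonR lam f g h u (σ * extL (m := α) τ) := by
    intro σ τ
    have hsplit : (∏ i : Fin α, ∏ x : Fin (β + γ),
          lam (u (σ (Fin.castAdd (β + γ) i))) (u (σ (Fin.natAdd α x))))
        = (∏ i : Fin α, ∏ j : Fin β,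
            lam (u (σ (Fin.castAdd (β + γ) i))) (u (σ (Fin.natAdd α (τ (Fin.castAdd γ j)))))) *
          (∏ i : Fin α, ∏ k : Fin γ,
            lam (u (σ (Fin.castAdd (β + γ) i))) (u (σ (Fin.natAdd α (τ (Fin.natAdd β k)))))) := by
      rw [← Finset.prod_mul_distrib]
      refine Finset.prod_congr rfl fun i _ => ?_
      rw [← Equiv.prod_comp τ (fun x =>
        lam (u (σ (Fin.castAdd (β + γ) i))) (u (σ (Fin.natAdd α x)))), Fin.prod_univ_add]
    rw [hsplit]
    simp only [canonR, Equiv.Perm.mul_apply, extL_castAdd, extL_natAdd]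
    ring
  calc (1 / ((α.factorial : ℂ) * ((β + γ).factorial : ℂ))) *
      ∑ σ : Equiv.Perm (Fin (α + (β + γ))),
        (f fun i => u (σ (Fin.castAdd (β + γ) i))) *
        ((1 / ((β.factorial : ℂ) * γ.factorial)) *
          ∑ τ : Equiv.Perm (Fin (β + γ)),
            (g fun j => u (σ (Fin.natAdd α (τ (Fin.castAdd γ j))))) *
            (h fun k => u (σ (Fin.natAdd α (τ (Fin.natAdd β k))))) *
            ∏ j : Fin β, ∏ k : Fin γ,
              lam (u (σ (Fin.natAdd α (τ (Fin.castAdd γ j)))))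
                  (u (σ (Fin.natAdd α (τ (Fin.natAdd β k)))))) *
        ∏ i : Fin α, ∏ x : Fin (β + γ),
          lam (u (σ (Fin.castAdd (β + γ) i))) (u (σ (Fin.natAdd α x)))
      = (1 / ((α.factorial : ℂ) * ((β + γ).factorial : ℂ))) * ((1 / ((β.factorial : ℂ) * γ.factorial)) *
          ∑ σ : Equiv.Perm (Fin (α + (β + γ))), ∑ τ : Equiv.Perm (Fin (β + γ)),
            canonR lam f g h u (σ * extL (m := α) τ)) := by
        have per : ∀ σ : Equiv.Perm (Fin (α + (β + γ))),
            (f fun i => u (σ (Fin.castAdd (β + γ) i))) *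
            ((1 / ((β.factorial : ℂ) * γ.factorial)) *
              ∑ τ : Equiv.Perm (Fin (β + γ)),
                (g fun j => u (σ (Fin.natAdd α (τ (Fin.castAdd γ j))))) *
                (h fun k => u (σ (Fin.natAdd α (τ (Fin.natAdd β k))))) *
                ∏ j : Fin β, ∏ k : Fin γ,
                  lam (u (σ (Fin.natAdd α (τ (Fin.castAdd γ j)))))
                      (u (σ (Fin.natAdd α (τ (Fin.natAdd β k)))))) *
            (∏ i : Fin α, ∏ x : Fin (β + γ),
              lam (u (σ (Fin.castAdd (β + γ) i))) (u (σ (Fin.natAdd α x))))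
            = (1 / ((β.factorial : ℂ) * γ.factorial)) *
                ∑ τ : Equiv.Perm (Fin (β + γ)), canonR lam f g h u (σ * extL (m := α) τ) := by
          intro σ
          rw [Finset.sum_congr rfl fun τ _ => (key σ τ).symm, ← Finset.sum_mul, ← Finset.mul_sum]
          ring
        rw [Finset.sum_congr rfl fun σ _ => per σ, ← Finset.mul_sum]
    _ = (1 / ((α.factorial : ℂ) * ((β + γ).factorial : ℂ))) * ((1 / ((β.factorial : ℂ) * γ.factorial)) *
          ∑ τ : Equiv.Perm (Fin (β + γ)), ∑ σ : Equiv.Perm (Fin (α + (β + γ))),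
            canonR lam f g h u (σ * extL (m := α) τ)) := by rw [Finset.sum_comm]
    _ = (1 / ((α.factorial : ℂ) * ((β + γ).factorial : ℂ))) * ((1 / ((β.factorial : ℂ) * γ.factorial)) *
          (((β + γ).factorial : ℂ) * ∑ ρ : Equiv.Perm (Fin (α + (β + γ))), canonR lam f g h u ρ)) := by
        have swap : ∀ τ : Equiv.Perm (Fin (β + γ)),
            (∑ σ : Equiv.Perm (Fin (α + (β + γ))), canonR lam f g h u (σ * extL (m := α) τ))
              = ∑ ρ : Equiv.Perm (Fin (α + (β + γ))), canonR lam f g h u ρ := fun τ =>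
          Fintype.sum_equiv (Equiv.mulRight (extL (m := α) τ)) _ _ (fun σ => rfl)
        rw [Finset.sum_congr rfl fun τ _ => swap τ, Finset.sum_const, nsmul_eq_mul]
        simp [Fintype.card_perm]
    _ = (1 / ((α.factorial : ℂ) * β.factorial * γ.factorial)) *
          ∑ ρ : Equiv.Perm (Fin (α + (β + γ))), canonR lam f g h u ρ := by
        have h1 : (((β + γ)).factorial : ℂ) ≠ 0 := Nat.cast_ne_zero.2 (Nat.factorial_ne_zero _)
        have h2 : ((γ).factorial : ℂ) ≠ 0 := Nat.cast_ne_zero.2 (Nat.factorial_ne_zero _)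
        have h3 : ((α).factorial : ℂ) ≠ 0 := Nat.cast_ne_zero.2 (Nat.factorial_ne_zero _)
        have h4 : ((β).factorial : ℂ) ≠ 0 := Nat.cast_ne_zero.2 (Nat.factorial_ne_zero _)
        field_simp

lemma canon_bridge (lam : U → U → ℂ) {α β γ : ℕ}
    (f : (Fin α → U) → ℂ) (g : (Fin β → U) → ℂ) (h : (Fin γ → U) → ℂ)
    (u : Fin (α + β + γ) → U) (hc : α + (β + γ) = α + β + γ) :
    ∑ ρ : Equiv.Perm (Fin (α + β + γ)), canonL lam f g h u ρ
      = ∑ ρ : Equiv.Perm (Fin (α + (β + γ))),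
          canonR lam f g h
            (fun i => u (Fin.cast hc i)) ρ := by
  have e : α + β + γ = α + (β + γ) := by omega
  set ε : Fin (α + β + γ) ≃ Fin (α + (β + γ)) := finCongr e with hε
  refine Fintype.sum_equiv ε.permCongr _ _ fun ρ => ?_
  have b1 : ∀ i : Fin α, ε.symm (Fin.castAdd (β + γ) i) = Fin.castAdd γ (Fin.castAdd β i) := by
    intro i; apply Fin.ext; simp [hε]
  have b2 : ∀ j : Fin β, ε.symm (Fin.natAdd α (Fin.castAdd γ j)) = Fin.castAdd γ (Fin.natAdd α j) := by
    intro j; apply Fin.ext; simp [hε]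
  have b3 : ∀ k : Fin γ, ε.symm (Fin.natAdd α (Fin.natAdd β k)) = Fin.natAdd (α + β) k := by
    intro k; apply Fin.ext; simp [hε]; omega
  have uε : ∀ z : Fin (α + β + γ),
      u (Fin.cast hc (ε z)) = u z := by
    intro z; simp [hε]
  have e1 : ∀ i : Fin α,
      u (Fin.cast hc
        ((ε.permCongr ρ) (Fin.castAdd (β + γ) i))) = u (ρ (Fin.castAdd γ (Fin.castAdd β i))) := by
    intro i; rw [Equiv.permCongr_apply, b1, uε]
  have e2 : ∀ j : Fin β,
      u (Fin.cast hc
        ((ε.permCongr ρ) (Fin.natAdd α (Fin.castAdd γ j)))) = u (ρ (Fin.castAdd γ (Fin.natAdd α j))) := by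
    intro j; rw [Equiv.permCongr_apply, b2, uε]
  have e3 : ∀ k : Fin γ,
      u (Fin.cast hc
        ((ε.permCongr ρ) (Fin.natAdd α (Fin.natAdd β k)))) = u (ρ (Fin.natAdd (α + β) k)) := by
    intro k; rw [Equiv.permCongr_apply, b3, uε]
  simp only [canonL, canonR, e1, e2, e3]

end ShuffleAux

/-- For any weight function `λ(x,y)`, the shuffle product on symmetric
functions is associative. -/
theorem shuffleMul_assoc {U : Type*} (lam : U → U → ℂ) {α β γ : ℕ}
    (f : (Fin α → U) → ℂ) (g : (Fin β → U) → ℂ) (h : (Fin γ → U) → ℂ)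
    (hf : ∀ (σ : Equiv.Perm (Fin α)) (u : Fin α → U), f (u ∘ σ) = f u)
    (hg : ∀ (σ : Equiv.Perm (Fin β)) (u : Fin β → U), g (u ∘ σ) = g u)
    (hh : ∀ (σ : Equiv.Perm (Fin γ)) (u : Fin γ → U), h (u ∘ σ) = h u) :
    ∀ u : Fin (α + β + γ) → U,
      shuffleMul lam (shuffleMul lam f g) h u =
        shuffleMul lam f (shuffleMul lam g h)
          (fun i : Fin (α + (β + γ)) =>
            u (Fin.cast (by omega : α + (β + γ) = α + β + γ) i)) := by
  intro u
  rw [ShuffleAux.left_form, ShuffleAux.right_form, ShuffleAux.canon_bridge]
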